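/- Let A = ⟨Q, Σ⟩ be a DFA such that the iteratively constructed graph Γ(A) is not strongly connected. Then A is not completely reachable; more precisely, if Γ(A) = Γ_k(A), then some subset of Q with at least |Q| − k states is not reachable in A. -/

import Mathlib

/-!
Framework: complete deterministic finite automata, reachability of subsets,
defect/excluded/duplicate states of words, and the layered graphs
`Γ₁(A), Γ₂(A), …` of Bondar & Volkov, "A Characterization of Completely
Reachable Automata".
-/

/-- The action of a word on a state: `q · w`. -/
def actWord {Q σ : Type*} (δ : Q → σ → Q) (w : List σ) (q : Q) : Q :=
  w.foldl δ q

/-- The image of a set of states under a word: `P · w`. -/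
def actSet {Q σ : Type*} (δ : Q → σ → Q) (w : List σ) (P : Set Q) : Set Q :=
  actWord δ w '' P

/-- The set `excl(w) = Q \ Q·w` of excluded states of the word `w`. -/
def excl {Q σ : Type*} (δ : Q → σ → Q) (w : List σ) : Set Q :=
  Set.univ \ actSet δ w Set.univ

/-- The defect of the word `w`, i.e. `|Q \ Q·w|`. -/
noncomputable def defect {Q σ : Type*} (δ : Q → σ → Q) (w : List σ) : ℕ :=
  (excl δ w).ncard

/-- The set `dupl(w)` of duplicate states of the word `w`. -/
def dupl {Q σ : Type*} (δ : Q → σ → Q) (w : List σ) : Set Q :=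
  {p | ∃ q₁ q₂ : Q, q₁ ≠ q₂ ∧ actWord δ w q₁ = p ∧ actWord δ w q₂ = p}

/-- A subset `P ⊆ Q` is reachable if `P = Q·w` for some word `w`. -/
def reachableSubset {Q σ : Type*} (δ : Q → σ → Q) (P : Set Q) : Prop :=
  ∃ w : List σ, actSet δ w Set.univ = P

/-- A DFA is completely reachable if every nonempty subset of states is reachable. -/
def completelyReachable {Q σ : Type*} (δ : Q → σ → Q) : Prop :=
  ∀ P : Set Q, P.Nonempty → reachableSubset δ P

/-- A directed graph given by a vertex set and an edge relation. -/
structure DGraph (V : Type*) where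
  verts : Set V
  edge : V → V → Prop

/-- Reachability by a directed path in a graph. -/
def GReach {V : Type*} (G : DGraph V) : V → V → Prop :=
  Relation.ReflTransGen G.edge

/-- A graph is strongly connected if each of its vertices is reachable from
any other one. -/
def StronglyConnected {V : Type*} (G : DGraph V) : Prop :=
  ∀ u ∈ G.verts, ∀ v ∈ G.verts, GReach G u v

/-- The strongly connected component of the vertex `v`: all vertices mutually
reachable with `v`. -/
def scc {V : Type*} (G : DGraph V) (v : V) : Set V :=
  {u | u ∈ G.verts ∧ GReach G u v ∧ GReach G v u}

/-- Vertices of the layered graphs: states (`Sum.inl`) and subsets of states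
(`Sum.inr`). -/
abbrev Vtx (Q : Type*) := Q ⊕ Set Q

/-- The support of a set of vertices: the states belonging to it. -/
def support {Q : Type*} (S : Set (Vtx Q)) : Set Q :=
  {q | Sum.inl q ∈ S}

/-- The graph `Γ₁(A)`: vertices are the states, and there is an edge
`(excl w, dupl w)` for each word `w` of defect 1. -/
def Gamma1 {Q σ : Type*} (δ : Q → σ → Q) : DGraph (Vtx Q) where
  verts := Set.range Sum.inl
  edge := fun u v => ∃ q p : Q, u = Sum.inl q ∧ v = Sum.inl p ∧
    ∃ w : List σ, defect δ w = 1 ∧ excl δ w = {q} ∧ p ∈ dupl δ w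

/-- `Qnext G k`: the collection of the supports of all SCCs of `G` of rank
at least `k` (this is the set `Q_k` when `G = Γ_{k-1}(A)`). -/
def Qnext {Q : Type*} (G : DGraph (Vtx Q)) (k : ℕ) : Set (Set Q) :=
  {C | ∃ v ∈ G.verts, C = support (scc G v) ∧ k ≤ C.ncard}

/-- One step of the iterative construction: from `G = Γ_{k-1}(A)` build
`Γ_k(A)` by adding the new vertices `Q_k`, the inclusion edges `I_k`, and the
edges `E_k` enforced by words of defect `k`. -/
def step {Q σ : Type*} (δ : Q → σ → Q) (G : DGraph (Vtx Q)) (k : ℕ) :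
    DGraph (Vtx Q) where
  verts := G.verts ∪ Sum.inr '' Qnext G k
  edge := fun u v =>
    G.edge u v ∨
    (∃ C ∈ Qnext G k, v = Sum.inr C ∧
      ((∃ q : Q, u = Sum.inl q ∧ q ∈ C) ∨
       (∃ D : Set Q, u = Sum.inr D ∧ Sum.inr D ∈ G.verts ∧ D ⊂ C))) ∨
    (∃ C ∈ Qnext G k, ∃ p : Q, u = Sum.inr C ∧ v = Sum.inl p ∧
      ∃ w : List σ, defect δ w = k ∧ excl δ w ⊆ C ∧ p ∈ dupl δ w)

/-- The layered graphs `Γ_k(A)` (with `Γ_0 := Γ_1`). -/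
def Gamma {Q σ : Type*} (δ : Q → σ → Q) : ℕ → DGraph (Vtx Q)
  | 0 => Gamma1 δ
  | 1 => Gamma1 δ
  | (k + 2) => step δ (Gamma δ (k + 1)) (k + 2)

/-- The FAILURE condition at step `k`: every SCC of `Γ_k(A)` has rank at
most `k`. -/
def failsAt {Q σ : Type*} (δ : Q → σ → Q) (k : ℕ) : Prop :=
  ∀ v ∈ (Gamma δ k).verts, (support (scc (Gamma δ k) v)).ncard ≤ k

/-- The iterative construction stops at step `k` (so `Γ(A) = Γ_k(A)`):
`k` is the first index at which `Γ_k(A)` is strongly connected (SUCCESS) or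
every SCC of `Γ_k(A)` has rank at most `k` (FAILURE). -/
def stopsAt {Q σ : Type*} (δ : Q → σ → Q) (k : ℕ) : Prop :=
  1 ≤ k ∧ (StronglyConnected (Gamma δ k) ∨ failsAt δ k) ∧
    ∀ j, 1 ≤ j → j < k → ¬ StronglyConnected (Gamma δ j) ∧ ¬ failsAt δ j

section Aux
variable {Q σ : Type*}

lemma edge_succ (δ : Q → σ → Q) {j : ℕ} {u v : Vtx Q} (h : (Gamma δ j).edge u v) :
    (Gamma δ (j+1)).edge u v := by
  cases j with
  | zero => exact h
  | succ j' => exact Or.inl h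

lemma verts_succ (δ : Q → σ → Q) {j : ℕ} {u : Vtx Q} (h : u ∈ (Gamma δ j).verts) :
    u ∈ (Gamma δ (j+1)).verts := by
  cases j with
  | zero => exact h
  | succ j' => exact Or.inl h

lemma edge_mono (δ : Q → σ → Q) {i j : ℕ} (hij : i ≤ j) {u v : Vtx Q}
    (h : (Gamma δ i).edge u v) : (Gamma δ j).edge u v := by
  induction j, hij using Nat.le_induction with
  | base => exact h
  | succ n hn ih => exact edge_succ δ ih

lemma greach_mono (δ : Q → σ → Q) {i j : ℕ} (hij : i ≤ j) {u v : Vtx Q}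
    (h : GReach (Gamma δ i) u v) : GReach (Gamma δ j) u v :=
  Relation.ReflTransGen.mono (r := (Gamma δ i).edge) (fun _ _ hab => edge_mono δ hij hab) u v h

lemma inl_mem_verts (δ : Q → σ → Q) (m : ℕ) (q : Q) :
    (Sum.inl q : Vtx Q) ∈ (Gamma δ m).verts := by
  induction m with
  | zero => exact ⟨q, rfl⟩
  | succ m ih =>
    cases m with
    | zero => exact ⟨q, rfl⟩
    | succ m' => exact Or.inl ih

lemma edge_mem (δ : Q → σ → Q) : ∀ m, ∀ {u v : Vtx Q}, (Gamma δ m).edge u v →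
    u ∈ (Gamma δ m).verts ∧ v ∈ (Gamma δ m).verts := by
  intro m
  induction m using Nat.strong_induction_on with
  | _ m ih =>
    rcases m with _ | _ | m <;> intro u v h
    · obtain ⟨q, p, rfl, rfl, _⟩ := h
      exact ⟨⟨q, rfl⟩, ⟨p, rfl⟩⟩
    · obtain ⟨q, p, rfl, rfl, _⟩ := h
      exact ⟨⟨q, rfl⟩, ⟨p, rfl⟩⟩
    · rcases h with h | ⟨C, hC, rfl, h⟩ | ⟨C, hC, p, rfl, rfl, _⟩
      · obtain ⟨h1, h2⟩ := ih (m+1) (by omega) h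
        exact ⟨Or.inl h1, Or.inl h2⟩
      · refine ⟨?_, Or.inr ⟨C, hC, rfl⟩⟩
        rcases h with ⟨q, rfl, _⟩ | ⟨D, rfl, hD, _⟩
        · exact inl_mem_verts δ _ q
        · exact Or.inl hD
      · exact ⟨Or.inr ⟨C, hC, rfl⟩, inl_mem_verts δ _ p⟩

lemma edge_inl_inr (δ : Q → σ → Q) : ∀ m {q : Q} {C : Set Q},
    (Gamma δ m).edge (Sum.inl q) (Sum.inr C) → q ∈ C := by
  intro m
  induction m using Nat.strong_induction_on with
  | _ m ih =>
    rcases m with _ | _ | m <;> intro q C h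
    · obtain ⟨_, _, _, h, _⟩ := h; exact absurd h (by simp)
    · obtain ⟨_, _, _, h, _⟩ := h; exact absurd h (by simp)
    · rcases h with h | ⟨C', hC', hv, h⟩ | ⟨C', hC', p, _, hv, _⟩
      · exact ih (m+1) (by omega) h
      · injection hv with hEq
        rcases h with ⟨q', hq, hq'⟩ | ⟨D, hD, _⟩
        · injection hq with hq2
          rw [hEq, hq2]
          exact hq' 
        · exact absurd hD (by simp)
      · exact absurd hv (by simp)

lemma edge_inr_inr (δ : Q → σ → Q) : ∀ m {D C : Set Q},
    (Gamma δ m).edge (Sum.inr D) (Sum.inr C) → D ⊆ C := by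
  intro m
  induction m using Nat.strong_induction_on with
  | _ m ih =>
    rcases m with _ | _ | m <;> intro D C h
    · obtain ⟨_, _, h, _⟩ := h; exact absurd h (by simp)
    · obtain ⟨_, _, h, _⟩ := h; exact absurd h (by simp)
    · rcases h with h | ⟨C', hC', hv, h⟩ | ⟨C', hC', p, _, hv, _⟩
      · exact ih (m+1) (by omega) h
      · injection hv with hEq
        rcases h with ⟨q', hq, _⟩ | ⟨D', hD, _, hsub⟩
        · exact absurd hq (by simp)
        · injection hD with hD2
          rw [hEq, hD2]
          exact hsub.subset
      · exact absurd hv (by simp)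

/-- Any path from a state into a subset-vertex passes through a state belonging
to that subset. -/
lemma reach_inr_last_state (δ : Q → σ → Q) (m : ℕ) {x : Q} {D : Set Q}
    (h : GReach (Gamma δ m) (Sum.inl x) (Sum.inr D)) :
    ∃ q ∈ D, GReach (Gamma δ m) (Sum.inl x) (Sum.inl q) := by
  have key : ∀ v, Relation.ReflTransGen (Gamma δ m).edge (Sum.inl x) v →
      ∀ D : Set Q, v = Sum.inr D →
      ∃ q ∈ D, Relation.ReflTransGen (Gamma δ m).edge (Sum.inl x) (Sum.inl q) := by
    intro v hv
    induction hv with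
    | refl => intro D hD; exact absurd hD (by simp)
    | @tail b c hab hbc ih =>
      intro D hD
      subst hD
      cases b with
      | inl q' => exact ⟨q', edge_inl_inr δ m hbc, hab⟩
      | inr D' =>
        obtain ⟨q, hq, hr⟩ := ih D' rfl
        exact ⟨q, edge_inr_inr δ m hbc hq, hr⟩
  exact key _ h D rfl

lemma exists_edge_into_inr (δ : Q → σ → Q) : ∀ m {C : Set Q},
    Sum.inr C ∈ (Gamma δ m).verts →
    ∃ q ∈ C, (Gamma δ m).edge (Sum.inl q) (Sum.inr C) := by
  intro m
  induction m using Nat.strong_induction_on with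
  | _ m ih =>
    rcases m with _ | _ | m <;> intro C h
    · obtain ⟨q, hq⟩ := h; exact absurd hq (by simp)
    · obtain ⟨q, hq⟩ := h; exact absurd hq (by simp)
    · rcases h with h | ⟨C', hC', hCC⟩
      · obtain ⟨q, hq, he⟩ := ih (m+1) (by omega) h
        exact ⟨q, hq, edge_succ δ he⟩
      · injection hCC with hEq
        rw [hEq] at hC'
        obtain ⟨v, hv, hCeq, hk⟩ := hC'
        have hCne : C.Nonempty := Set.nonempty_of_ncard_ne_zero (by omega)
        obtain ⟨q, hq⟩ := hCne
        exact ⟨q, hq, Or.inr (Or.inl ⟨C, ⟨v, hv, hCeq, hk⟩, rfl, Or.inl ⟨q, rfl, hq⟩⟩)⟩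

lemma exists_level (δ : Q → σ → Q) : ∀ m {C : Set Q},
    Sum.inr C ∈ (Gamma δ m).verts →
    ∃ ℓ, 2 ≤ ℓ ∧ ℓ ≤ m ∧ C ∈ Qnext (Gamma δ (ℓ-1)) ℓ := by
  intro m
  induction m using Nat.strong_induction_on with
  | _ m ih =>
    rcases m with _ | _ | m <;> intro C h
    · obtain ⟨q, hq⟩ := h; exact absurd hq (by simp)
    · obtain ⟨q, hq⟩ := h; exact absurd hq (by simp)
    · rcases h with h | ⟨C', hC', hCC⟩
      · obtain ⟨ℓ, h1, h2, h3⟩ := ih (m+1) (by omega) h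
        exact ⟨ℓ, h1, by omega, h3⟩
      · injection hCC with hEq
        rw [hEq] at hC'
        exact ⟨m+2, by omega, le_refl _, hC'⟩

/-- Hub extraction: a `Γ_{m+2}`-path between states either stays in `Γ_{m+1}`
or passes through a level-`(m+2)` hub, one of whose member states is reached. -/
lemma hub_lemma (δ : Q → σ → Q) (m : ℕ) {x : Q} :
    ∀ v, GReach (Gamma δ (m+2)) (Sum.inl x) v →
      (∃ C ∈ Qnext (Gamma δ (m+1)) (m+2), ∃ q ∈ C,
        GReach (Gamma δ (m+2)) (Sum.inl x) (Sum.inl q)) ∨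
      GReach (Gamma δ (m+1)) (Sum.inl x) v := by
  have main : ∀ v, Relation.ReflTransGen (Gamma δ (m+2)).edge (Sum.inl x) v →
      (∃ C ∈ Qnext (Gamma δ (m+1)) (m+2), ∃ q ∈ C,
        GReach (Gamma δ (m+2)) (Sum.inl x) (Sum.inl q)) ∨
      GReach (Gamma δ (m+1)) (Sum.inl x) v := by
    intro v hv
    induction hv with
    | refl => exact Or.inr Relation.ReflTransGen.refl
    | @tail b c hab hbc ih =>
      rcases ih with hL | hR
      · exact Or.inl hL
      · rcases hbc with h | ⟨C, hC, rfl, hu⟩ | ⟨C, hC, p, rfl, rfl, _⟩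
        · exact Or.inr (hR.tail h)
        · rcases hu with ⟨q, rfl, hqC⟩ | ⟨D, rfl, hDv, hDC⟩
          · exact Or.inl ⟨C, hC, q, hqC, hab⟩
          · obtain ⟨q, hq, hr⟩ := reach_inr_last_state δ (m+1) hR
            exact Or.inl ⟨C, hC, q, hDC.subset hq, greach_mono δ (by omega) hr⟩
        · obtain ⟨q, hq, hr⟩ := reach_inr_last_state δ (m+1) hR
          exact Or.inl ⟨C, hC, q, hq, greach_mono δ (by omega) hr⟩
  exact main

lemma excl_of_act (δ : Q → σ → Q) (w : List σ) (T : Set Q)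
    (hw : actSet δ w Set.univ = Set.univ \ T) : excl δ w = T := by
  unfold excl
  rw [hw, Set.diff_diff_cancel_left (Set.subset_univ T)]

lemma dupl_nonempty [Fintype Q] (δ : Q → σ → Q) (w : List σ) {T : Set Q}
    (hT : T.Nonempty) (hw : actSet δ w Set.univ = Set.univ \ T) :
    ∃ p ∈ dupl δ w, p ∈ Set.univ \ T := by
  obtain ⟨t, ht⟩ := hT
  have hns : ¬ Function.Surjective (actWord δ w) := by
    intro hs
    obtain ⟨q, hq⟩ := hs t
    have hmem : t ∈ actSet δ w Set.univ := ⟨q, trivial, hq⟩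
    rw [hw] at hmem
    exact hmem.2 ht
  have hni : ¬ Function.Injective (actWord δ w) :=
    fun hi => hns (Finite.injective_iff_surjective.mp hi)
  rw [Function.not_injective_iff] at hni
  obtain ⟨a, b, hfab, hab⟩ := hni
  refine ⟨actWord δ w a, ⟨a, b, hab, rfl, hfab.symm⟩, ?_⟩
  rw [← hw]
  exact ⟨a, trivial, rfl⟩

lemma verts_small [Fintype Q] (δ : Q → σ → Q) (hc : Fintype.card Q ≤ 1) :
    ∀ m, (Gamma δ m).verts = Set.range Sum.inl := by
  intro m
  induction m using Nat.strong_induction_on with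
  | _ m ih =>
    rcases m with _ | _ | m
    · rfl
    · rfl
    · show (Gamma δ (m+1)).verts ∪ _ = _
      rw [ih (m+1) (by omega)]
      have : Sum.inr '' Qnext (Gamma δ (m+1)) (m+2) = (∅ : Set (Vtx Q)) := by
        rw [Set.image_eq_empty, Set.eq_empty_iff_forall_notMem]
        rintro C ⟨v, hv, hCeq, hk⟩
        have h1 : C.ncard ≤ 1 := by
          calc C.ncard ≤ (Set.univ : Set Q).ncard :=
                Set.ncard_le_ncard (Set.subset_univ C) (Set.toFinite _)
            _ ≤ 1 := by rw [Set.ncard_univ, Nat.card_eq_fintype_card]; exact hc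
        omega
      rw [this, Set.union_empty]

lemma sc_small [Fintype Q] (δ : Q → σ → Q) (hc : Fintype.card Q ≤ 1) (m : ℕ) :
    StronglyConnected (Gamma δ m) := by
  intro u hu v hv
  rw [verts_small δ hc] at hu hv
  obtain ⟨x, rfl⟩ := hu
  obtain ⟨y, rfl⟩ := hv
  obtain rfl : x = y := Fintype.card_le_one_iff.mp hc x y
  exact Relation.ReflTransGen.refl

end Aux

/-- Theorem 4: if the construction stops at step `k` (i.e.
`Γ(A) = Γ_k(A)`) and `Γ(A)` is not strongly connected, then `A` is not
completely reachable; more precisely, some subset of `Q` with at least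
`|Q| - k` states is not reachable in `A`. -/
theorem gamma_not_strongly_connected_not_completely_reachable
    {Q σ : Type*} [Fintype Q] (δ : Q → σ → Q) (k : ℕ)
    (hstop : stopsAt δ k) (hnsc : ¬ StronglyConnected (Gamma δ k)) :
    ¬ completelyReachable δ ∧
      ∃ P : Set Q, Fintype.card Q - k ≤ P.ncard ∧ ¬ reachableSubset δ P := by
  classical
  obtain ⟨hk1, hstop2, hprev⟩ := hstop
  have hfails : failsAt δ k := hstop2.resolve_left hnsc
  have hn2 : 2 ≤ Fintype.card Q := by
    by_contra h
    exact hnsc (sc_small δ (by omega) k)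
  have hQne : Nonempty Q := Fintype.card_pos_iff.mp (by omega)
  obtain ⟨qhat⟩ := hQne
  have key : ∃ T : Set Q, T.Nonempty ∧ T ≠ Set.univ ∧ T.ncard ≤ k ∧
      ¬ reachableSubset δ (Set.univ \ T) := by
    by_contra hkey
    push_neg at hkey
    have R : ∀ T : Set Q, T.Nonempty → T ≠ Set.univ → T.ncard ≤ k →
        ∃ w : List σ, actSet δ w Set.univ = Set.univ \ T := fun T h1 h2 h3 =>
      hkey T h1 h2 h3
    -- find a sink SCC of `Γ_k`
    have hvne : (Gamma δ k).verts.Nonempty := ⟨Sum.inl qhat, inl_mem_verts δ k qhat⟩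
    obtain ⟨v₀, hv₀, hmin⟩ := Set.exists_min_image (Gamma δ k).verts
      (fun v => {u | GReach (Gamma δ k) v u}.ncard) (Set.toFinite _) hvne
    have hmax : ∀ z, GReach (Gamma δ k) v₀ z →
        GReach (Gamma δ k) z v₀ ∧ z ∈ (Gamma δ k).verts := by
      intro z hz
      have hzv : z ∈ (Gamma δ k).verts := by
        rcases Relation.ReflTransGen.cases_tail hz with heq | ⟨c, _, hcz⟩
        · rw [heq]; exact hv₀
        · exact (edge_mem δ k hcz).2
      have hsub : {u | GReach (Gamma δ k) z u} ⊆ {u | GReach (Gamma δ k) v₀ u} :=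
        fun u hu => hz.trans hu
      have heqs : {u | GReach (Gamma δ k) z u} = {u | GReach (Gamma δ k) v₀ u} :=
        Set.eq_of_subset_of_ncard_le hsub (hmin z hzv) (Set.toFinite _)
      have hv0mem : v₀ ∈ {u | GReach (Gamma δ k) z u} := by
        rw [heqs]; exact Relation.ReflTransGen.refl
      exact ⟨hv0mem, hzv⟩
    have hv₀V : v₀ ∈ scc (Gamma δ k) v₀ :=
      ⟨hv₀, Relation.ReflTransGen.refl, Relation.ReflTransGen.refl⟩
    have hclo : ∀ u ∈ scc (Gamma δ k) v₀, ∀ z, GReach (Gamma δ k) u z →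
        z ∈ scc (Gamma δ k) v₀ := by
      intro u hu z hz
      have h1 : GReach (Gamma δ k) v₀ z := hu.2.2.trans hz
      obtain ⟨h2, h3⟩ := hmax z h1
      exact ⟨h3, h2, h1⟩
    set S := support (scc (Gamma δ k) v₀) with hSdef
    have hfailS : S.ncard ≤ k := hfails v₀ hv₀
    have hclS : ∀ q ∈ S, ∀ p : Q, GReach (Gamma δ k) (Sum.inl q) (Sum.inl p) → p ∈ S := by
      intro q hq p hp
      exact hclo _ hq _ hp
    by_cases hSne : S.Nonempty
    · -- S nonempty
      obtain ⟨q₀, hq₀⟩ := hSne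
      have hSnu : S ≠ Set.univ := by
        intro hSu
        apply hnsc
        have hall : ∀ u ∈ (Gamma δ k).verts, u ∈ scc (Gamma δ k) v₀ := by
          intro u hu
          cases u with
          | inl q =>
            have : q ∈ S := by rw [hSu]; trivial
            exact this
          | inr C =>
            obtain ⟨q, hqC, hedge⟩ := exists_edge_into_inr δ k hu
            have hqS : q ∈ S := by rw [hSu]; trivial
            exact hclo _ hqS _ (Relation.ReflTransGen.single hedge)
        intro u hu v hv
        exact ((hall u hu).2.1).trans ((hall v hv).2.2)
      have hd1 : 1 ≤ S.ncard := by
        have := (Set.ncard_pos (Set.toFinite S)).mpr ⟨q₀, hq₀⟩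
        omega
      obtain ⟨w, hw⟩ := R S ⟨q₀, hq₀⟩ hSnu hfailS
      have hexcl : excl δ w = S := excl_of_act δ w S hw
      have hdef : defect δ w = S.ncard := by unfold defect; rw [hexcl]
      obtain ⟨p, hp, hpQ⟩ := dupl_nonempty δ w ⟨q₀, hq₀⟩ hw
      by_cases hd : S.ncard = 1
      · -- defect-1 word: direct Γ₁ edge
        obtain ⟨q, hq⟩ := Set.ncard_eq_one.mp hd
        have hedge1 : (Gamma δ 1).edge (Sum.inl q) (Sum.inl p) :=
          ⟨q, p, rfl, rfl, w, by rw [hdef, hd], by rw [hexcl, hq], hp⟩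
        have hqS : q ∈ S := by rw [hq]; rfl
        have hpS : p ∈ S := hclS q hqS p
          (Relation.ReflTransGen.single (edge_mono δ hk1 hedge1))
        exact hpQ.2 hpS
      · -- defect ≥ 2
        obtain ⟨e, he⟩ : ∃ e, S.ncard = e + 2 := ⟨S.ncard - 2, by omega⟩
        set P' : ℕ → Prop := fun j => ∀ x ∈ S, ∀ y ∈ S,
          GReach (Gamma δ j) (Sum.inl x) (Sum.inl y) with hP'def
        have hPk : P' k := by
          intro x hx y hy
          exact (hx : Sum.inl x ∈ scc (Gamma δ k) v₀).2.1.trans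
            (hy : Sum.inl y ∈ scc (Gamma δ k) v₀).2.2
        have hex : ∃ j, P' j := ⟨k, hPk⟩
        have hik : Nat.find hex ≤ k := Nat.find_min' hex hPk
        by_cases hile : Nat.find hex ≤ e + 1
        · -- final blow at level `d = e+2 = |S|`
          have hPd1 : P' (e+1) := by
            intro x hx y hy
            exact greach_mono δ (by omega) (Nat.find_spec hex x hx y hy)
          have hSC : ∀ x ∈ S, Sum.inl x ∈ scc (Gamma δ (e+1)) (Sum.inl q₀) :=
            fun x hx => ⟨inl_mem_verts δ (e+1) x, hPd1 x hx q₀ hq₀, hPd1 q₀ hq₀ x hx⟩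
          set C := support (scc (Gamma δ (e+1)) (Sum.inl q₀)) with hCdef
          have hSsubC : S ⊆ C := fun x hx => hSC x hx
          have hCQ : C ∈ Qnext (Gamma δ (e+1)) (e+2) :=
            ⟨Sum.inl q₀, inl_mem_verts δ (e+1) q₀, rfl,
              by rw [← he]; exact Set.ncard_le_ncard hSsubC (Set.toFinite _)⟩
          have hedgeI : (Gamma δ (e+2)).edge (Sum.inl q₀) (Sum.inr C) :=
            Or.inr (Or.inl ⟨C, hCQ, rfl, Or.inl ⟨q₀, rfl, hSsubC hq₀⟩⟩)
          have hedgeE : (Gamma δ (e+2)).edge (Sum.inr C) (Sum.inl p) :=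
            Or.inr (Or.inr ⟨C, hCQ, p, rfl, rfl, w, by rw [hdef, he],
              by rw [hexcl]; exact hSsubC, hp⟩)
          have hek : e + 2 ≤ k := by omega
          have hpS : p ∈ S := hclS q₀ hq₀ p
            ((Relation.ReflTransGen.single (edge_mono δ hek hedgeI)).tail
              (edge_mono δ hek hedgeE))
          exact hpQ.2 hpS
        · -- hub extraction at level `i = Nat.find hex ≥ e+2`
          obtain ⟨m, hm⟩ : ∃ m, Nat.find hex = m + 2 := ⟨Nat.find hex - 2, by omega⟩
          have hnotP : ¬ P' (m+1) := Nat.find_min hex (by omega)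
          simp only [hP'def] at hnotP
          push_neg at hnotP
          obtain ⟨x, hx, y, hy, hnxy⟩ := hnotP
          have hxy : GReach (Gamma δ (m+2)) (Sum.inl x) (Sum.inl y) := by
            rw [← hm]; exact Nat.find_spec hex x hx y hy
          rcases hub_lemma δ m _ hxy with ⟨C, hCQ, q, hqC, hreach⟩ | hR
          · obtain ⟨v', hv', hCeq, hCcard⟩ := hCQ
            have hqS : q ∈ S := hclS x hx q (greach_mono δ (by omega) hreach)
            have hqscc : Sum.inl q ∈ scc (Gamma δ (m+1)) v' := by
              have : q ∈ support (scc (Gamma δ (m+1)) v') := by rw [← hCeq]; exact hqC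
              exact this
            have hCS : C ⊆ S := by
              intro q' hq'
              have hq'scc : Sum.inl q' ∈ scc (Gamma δ (m+1)) v' := by
                have : q' ∈ support (scc (Gamma δ (m+1)) v') := by rw [← hCeq]; exact hq'
                exact this
              have hqq' : GReach (Gamma δ (m+1)) (Sum.inl q) (Sum.inl q') :=
                hqscc.2.1.trans hq'scc.2.2
              exact hclS q hqS q' (greach_mono δ (by omega) hqq')
            have hCeqS : C = S := Set.eq_of_subset_of_ncard_le hCS
              (by omega) (Set.toFinite _)
            apply hnxy
            have hxscc : Sum.inl x ∈ scc (Gamma δ (m+1)) v' := by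
              have : x ∈ support (scc (Gamma δ (m+1)) v') := by
                rw [← hCeq, hCeqS]; exact hx
              exact this
            have hyscc : Sum.inl y ∈ scc (Gamma δ (m+1)) v' := by
              have : y ∈ support (scc (Gamma δ (m+1)) v') := by
                rw [← hCeq, hCeqS]; exact hy
              exact this
            exact hxscc.2.1.trans hyscc.2.2
          · exact hnxy hR
    · -- S empty: `v₀` is a subset-vertex
      have hSemp : ∀ q : Q, q ∉ S := fun q hq => hSne ⟨q, hq⟩
      cases hv₀v : v₀ with
      | inl q =>
        apply hSemp q
        rw [hSdef]
        show Sum.inl q ∈ scc (Gamma δ k) v₀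
        rw [← hv₀v]
        exact hv₀V
      | inr C =>
        have hv₀ : Sum.inr C ∈ (Gamma δ k).verts := by rw [← hv₀v]; exact hv₀
        have hv₀V : Sum.inr C ∈ scc (Gamma δ k) v₀ := by rw [← hv₀v]; exact hv₀V
        obtain ⟨ℓ, hℓ2, hℓk, hClev⟩ := exists_level δ k hv₀
        by_cases hℓn : ℓ < Fintype.card Q
        · -- get an outgoing edge from `v₀` to a state: contradiction with `S = ∅`
          obtain ⟨v', hv', hCeq, hℓC⟩ := hClev
          obtain ⟨T, hTC, hTcard⟩ := Set.exists_subset_card_eq hℓC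
          have hTne : T.Nonempty := Set.nonempty_of_ncard_ne_zero (by omega)
          have hTnu : T ≠ Set.univ := by
            intro h
            rw [h, Set.ncard_univ, Nat.card_eq_fintype_card] at hTcard
            omega
          obtain ⟨w, hw⟩ := R T hTne hTnu (by omega)
          have hexcl : excl δ w = T := excl_of_act δ w T hw
          have hdef : defect δ w = ℓ := by unfold defect; rw [hexcl, hTcard]
          obtain ⟨p, hp, hpQ⟩ := dupl_nonempty δ w hTne hw
          have hedge : (Gamma δ ℓ).edge (Sum.inr C) (Sum.inl p) := by
            obtain ⟨e, rfl⟩ : ∃ e, ℓ = e + 2 := ⟨ℓ - 2, by omega⟩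
            exact Or.inr (Or.inr ⟨C, ⟨v', hv', hCeq, hℓC⟩, p, rfl, rfl, w, hdef,
              by rw [hexcl]; exact hTC, hp⟩)
          apply hSemp p
          rw [hSdef]
          show Sum.inl p ∈ scc (Gamma δ k) v₀
          exact hclo _ hv₀V _ (Relation.ReflTransGen.single (edge_mono δ hℓk hedge))
        · -- `ℓ = |Q|`, forcing `C = univ`, `k = |Q|`; then `Γ_{|Q|-1}` is strongly
          -- connected, contradicting `stopsAt`
          obtain ⟨v', hv', hCeq, hℓC⟩ := hClev
          have hCle : C.ncard ≤ Fintype.card Q := by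
            have := Set.ncard_le_ncard (Set.subset_univ C) (Set.toFinite _)
            rwa [Set.ncard_univ, Nat.card_eq_fintype_card] at this
          have hℓn' : ℓ = Fintype.card Q := by omega
          have hkn : k ≤ Fintype.card Q := by
            by_contra hgt
            apply (hprev (Fintype.card Q) (by omega) (by omega)).2
            intro v hv
            have := Set.ncard_le_ncard (Set.subset_univ (support (scc (Gamma δ (Fintype.card Q)) v))) (Set.toFinite _)
            rwa [Set.ncard_univ, Nat.card_eq_fintype_card] at this
          have hkn' : k = Fintype.card Q := by omega
          -- all states are mutually reachable in Γ_{n-1}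
          have hCuniv : C = Set.univ := by
            apply Set.eq_of_subset_of_ncard_le (Set.subset_univ C) _ (Set.toFinite _)
            rw [Set.ncard_univ, Nat.card_eq_fintype_card]
            omega
          have hmut : ∀ x y : Q, GReach (Gamma δ (k-1)) (Sum.inl x) (Sum.inl y) := by
            intro x y
            have hx : Sum.inl x ∈ scc (Gamma δ (ℓ-1)) v' := by
              have : x ∈ support (scc (Gamma δ (ℓ-1)) v') := by
                rw [← hCeq, hCuniv]; trivial
              exact this
            have hy : Sum.inl y ∈ scc (Gamma δ (ℓ-1)) v' := by
              have : y ∈ support (scc (Gamma δ (ℓ-1)) v') := by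
                rw [← hCeq, hCuniv]; trivial
              exact this
            have : GReach (Gamma δ (ℓ-1)) (Sum.inl x) (Sum.inl y) := hx.2.1.trans hy.2.2
            have hle : ℓ - 1 ≤ k - 1 := by omega
            exact greach_mono δ hle this
          have hSCn : StronglyConnected (Gamma δ (k-1)) := by
            have claim1 : ∀ u ∈ (Gamma δ (k-1)).verts, ∃ x : Q,
                GReach (Gamma δ (k-1)) u (Sum.inl x) := by
              intro u hu
              cases u with
              | inl x => exact ⟨x, Relation.ReflTransGen.refl⟩
              | inr D =>
                obtain ⟨ℓ', h2', hle', hD⟩ := exists_level δ (k-1) hu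
                obtain ⟨v'', hv'', hDeq, hℓ'D⟩ := hD
                obtain ⟨T, hTD, hTcard⟩ := Set.exists_subset_card_eq hℓ'D
                have hTne : T.Nonempty := Set.nonempty_of_ncard_ne_zero (by omega)
                have hTnu : T ≠ Set.univ := by
                  intro h
                  rw [h, Set.ncard_univ, Nat.card_eq_fintype_card] at hTcard
                  omega
                obtain ⟨w', hw'⟩ := R T hTne hTnu (by omega)
                have hexcl' : excl δ w' = T := excl_of_act δ w' T hw'
                have hdef' : defect δ w' = ℓ' := by unfold defect; rw [hexcl', hTcard]
                obtain ⟨p, hp, _⟩ := dupl_nonempty δ w' hTne hw'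
                have hedge' : (Gamma δ ℓ').edge (Sum.inr D) (Sum.inl p) := by
                  obtain ⟨e, rfl⟩ : ∃ e, ℓ' = e + 2 := ⟨ℓ' - 2, by omega⟩
                  exact Or.inr (Or.inr ⟨D, ⟨v'', hv'', hDeq, hℓ'D⟩, p, rfl, rfl, w', hdef',
                    by rw [hexcl']; exact hTD, hp⟩)
                exact ⟨p, Relation.ReflTransGen.single (edge_mono δ hle' hedge')⟩
            have claim2 : ∀ u ∈ (Gamma δ (k-1)).verts, ∃ x : Q,
                GReach (Gamma δ (k-1)) (Sum.inl x) u := by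
              intro u hu
              cases u with
              | inl x => exact ⟨x, Relation.ReflTransGen.refl⟩
              | inr D =>
                obtain ⟨q, hq, hedge'⟩ := exists_edge_into_inr δ (k-1) hu
                exact ⟨q, Relation.ReflTransGen.single hedge'⟩
            intro u hu v hv
            obtain ⟨x, hxr⟩ := claim1 u hu
            obtain ⟨y, hyr⟩ := claim2 v hv
            exact hxr.trans ((hmut x y).trans hyr)
          exact (hprev (k-1) (by omega) (by omega)).1 hSCn
  obtain ⟨T, hTne, hTnu, hTk, hTun⟩ := key
  constructor
  · intro hcr
    have hne : (Set.univ \ T).Nonempty := by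
      rw [← Set.compl_eq_univ_diff]
      exact Set.nonempty_compl.mpr hTnu
    exact hTun (hcr _ hne)
  · refine ⟨Set.univ \ T, ?_, hTun⟩
    rw [Set.ncard_diff (Set.subset_univ T), Set.ncard_univ, Nat.card_eq_fintype_card]
    exact Nat.sub_le_sub_left hTk _
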